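/- Let M be a compact, second countable, zero-dimensional space. Then the group C(M,T) of continuous functions from M to the circle group T, with pointwise multiplication and the topology of uniform convergence, is connected. -/

import Mathlib

open Complex

/-- On the circle, a point at distance `< 1` from `1` lies in the slit plane. -/
lemma circle_mem_slitPlane_of_dist {z : Circle} (h : ‖(z : ℂ) - 1‖ < 1) :
    (z : ℂ) ∈ Complex.slitPlane := by
  left
  have h1 : Complex.normSq ((z : ℂ) - 1) < 1 := by
    have := Complex.sq_norm ((z : ℂ) - 1)
    nlinarith [norm_nonneg ((z : ℂ) - 1)]
  have h2 : Complex.normSq (z : ℂ) = 1 := by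
    have := Complex.sq_norm (z : ℂ)
    rw [z.norm_coe] at this
    linarith
  simp only [Complex.normSq_apply, Complex.sub_re, Complex.sub_im, Complex.one_re,
    Complex.one_im] at h1 h2 ⊢
  nlinarith

/-- Key lemma: every continuous map from a compact zero-dimensional space to the
circle lifts through `Circle.exp`. -/
lemma exists_lift {M : Type*} [TopologicalSpace M] [CompactSpace M]
    (hzerodim : TopologicalSpace.IsTopologicalBasis { s : Set M | IsClopen s })
    (f : C(M, Circle)) : ∃ g : C(M, ℝ), ∀ x, Circle.exp (g x) = f x := by
  classical
  rcases isEmpty_or_nonempty M with hM | hM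
  · exact ⟨⟨fun _ => 0, continuous_of_const fun a => (IsEmpty.false a).elim⟩,
      fun x => (IsEmpty.false x).elim⟩
  -- choose clopen neighborhoods on which f varies by less than 1/2
  have hcov : ∀ x : M, ∃ U : Set M, IsClopen U ∧ x ∈ U ∧ ∀ y ∈ U, dist (f y) (f x) < 1/2 := by
    intro x
    have hopen : IsOpen (f ⁻¹' Metric.ball (f x) (1/2)) :=
      f.continuous.isOpen_preimage _ Metric.isOpen_ball
    have hmem : x ∈ f ⁻¹' Metric.ball (f x) (1/2) := by
      simp [Metric.mem_ball]
    obtain ⟨U, hU, hxU, hUsub⟩ := hzerodim.exists_subset_of_mem_open hmem hopen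
    exact ⟨U, hU, hxU, fun y hy => hUsub hy⟩
  choose U hU hxU hUd using hcov
  -- compactness: finite subcover
  obtain ⟨s, hs⟩ := isCompact_univ.elim_finite_subcover U (fun x => (hU x).2)
    (fun x _ => Set.mem_iUnion.2 ⟨x, hxU x⟩)
  -- the locally constant "pattern" map
  set φ : M → ({x // x ∈ s} → Prop) := fun y x => y ∈ U x.1 with hφdef
  have hφ : IsLocallyConstant φ := by
    rw [IsLocallyConstant.iff_exists_open]
    intro y
    refine ⟨⋂ x : {x // x ∈ s}, (if y ∈ U x.1 then U x.1 else (U x.1)ᶜ), ?_, ?_, ?_⟩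
    · exact isOpen_iInter_of_finite fun x => by
        split <;> [exact (hU _).2; exact (hU _).compl.2]
    · exact Set.mem_iInter.2 fun x => by split <;> simpa [*]
    · intro z hz
      funext x
      have hzx := Set.mem_iInter.1 hz x
      by_cases hyx : y ∈ U x.1
      · rw [if_pos hyx] at hzx
        simp only [hφdef]
        exact propext ⟨fun _ => hyx, fun _ => hzx⟩
      · rw [if_neg hyx] at hzx
        simp only [hφdef]
        exact propext ⟨fun h => absurd h hzx, fun h => absurd h hyx⟩
  -- choose a representative point for each pattern
  set h : ({x // x ∈ s} → Prop) → M := fun b =>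
    if hb : ∃ y, φ y = b then hb.choose else Classical.arbitrary M with hhdef
  set r : M → M := h ∘ φ with hrdef
  have hr : ∀ y, φ (r y) = φ y := by
    intro y
    have hex : ∃ y', φ y' = φ y := ⟨y, rfl⟩
    simp only [hrdef, hhdef, Function.comp_apply, dif_pos hex]
    exact hex.choose_spec
  have hrlc : IsLocallyConstant r := hφ.comp h
  -- distance estimate
  have hdist : ∀ y, dist (f y) (f (r y)) < 1 := by
    intro y
    obtain ⟨x, hxs, hyx⟩ := Set.mem_iUnion₂.1 (hs (Set.mem_univ y))
    have hry : r y ∈ U x := by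
      have := congrFun (hr y) ⟨x, hxs⟩
      simp only [hφdef] at this
      exact this.symm ▸ hyx
    calc dist (f y) (f (r y)) ≤ dist (f y) (f x) + dist (f x) (f (r y)) := dist_triangle _ _ _
      _ < 1/2 + 1/2 := by
          have h1 := hUd x y hyx
          have h2 := hUd x (r y) hry
          rw [dist_comm (f x)]
          linarith
      _ = 1 := by norm_num
  -- the slit-plane condition
  have hslit : ∀ y, ((f y / f (r y) : Circle) : ℂ) ∈ Complex.slitPlane := by
    intro y
    apply circle_mem_slitPlane_of_dist
    have hne : ((f (r y) : ℂ)) ≠ 0 := Circle.coe_ne_zero _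
    have : ((f y / f (r y) : Circle) : ℂ) - 1 = ((f y : ℂ) - (f (r y) : ℂ)) / (f (r y) : ℂ) := by
      push_cast
      field_simp
    rw [this, norm_div, Circle.norm_coe, div_one]
    have := hdist y
    rw [← Complex.dist_eq]
    exact this
  -- define the lift
  set g : M → ℝ := fun y =>
    Complex.arg ((f y / f (r y) : Circle) : ℂ) + Complex.arg ((f (r y) : Circle) : ℂ) with hgdef
  have hgc : Continuous g := by
    apply Continuous.add
    · -- arg (f y / f (r y)) is continuous
      rw [continuous_iff_continuousAt]
      intro y
      have hu : Continuous fun y => ((f y / f (r y) : Circle) : ℂ) := by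
        have hden : Continuous fun y => ((f (r y) : Circle) : ℂ) :=
          (hrlc.comp fun z => ((f z : Circle) : ℂ)).continuous
        have hnum : Continuous fun y => ((f y : Circle) : ℂ) :=
          continuous_subtype_val.comp f.continuous
        simp only [Circle.coe_div]
        exact hnum.div hden fun y => Circle.coe_ne_zero _
      exact ContinuousAt.comp (g := Complex.arg) (Complex.continuousAt_arg (hslit y))
        hu.continuousAt
    · exact (hrlc.comp fun z => Complex.arg ((f z : Circle) : ℂ)).continuous
  refine ⟨⟨g, hgc⟩, fun x => ?_⟩
  simp only [ContinuousMap.coe_mk, hgdef]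
  rw [Circle.exp_add, Circle.exp_arg, Circle.exp_arg]
  exact div_mul_cancel _ _

/-- For a compact, second countable, zero-dimensional space `M`, the group `C(M, 𝕋)` of
continuous functions from `M` to the circle group, with pointwise multiplication and the
topology of uniform convergence, is connected. -/
theorem statement15
    {M : Type*} [TopologicalSpace M] [CompactSpace M] [T2Space M] [SecondCountableTopology M]
    -- `M` is zero-dimensional: the clopen sets form a topological basis
    (hzerodim : TopologicalSpace.IsTopologicalBasis { s : Set M | IsClopen s }) :
    ConnectedSpace C(M, Circle) := by
  have hjoin : ∀ f : C(M, Circle), Joined (1 : C(M, Circle)) f := by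
    intro f
    obtain ⟨g, hg⟩ := exists_lift hzerodim f
    -- the homotopy t ↦ exp (t • g)
    set F : C(ℝ, C(M, Circle)) :=
      ContinuousMap.curry ⟨fun p => Circle.exp (p.1 * g p.2), by
        exact Circle.exp.continuous.comp (continuous_fst.mul (g.continuous.comp continuous_snd))⟩
      with hFdef
    refine ⟨⟨⟨fun t => F t, F.continuous.comp continuous_subtype_val⟩, ?_, ?_⟩⟩
    · ext x
      simp [hFdef, ContinuousMap.curry_apply, Circle.exp_zero]
    · ext x
      simp [hFdef, ContinuousMap.curry_apply, hg x]
  have : PathConnectedSpace C(M, Circle) :=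
    ⟨⟨1⟩, fun a b => (hjoin a).symm.trans (hjoin b)⟩
  exact PathConnectedSpace.connectedSpace
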